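/- arXiv:1208.1223 — 6 statements merged into one kernel-verified Lean document; each statement's English description precedes it below -/
import Mathlib

section
/- Let (Ω, F, P) be a probability space, let N : Ω → ℕ be a random variable, and let λ > 0. Suppose that all descending factorial moments are bounded as E[N(N−1)⋯(N−m+1)] ≤ λ^m for every integer m ≥ 1. Then for every n ∈ ℕ, P(N = n) ≤ (λ^n / n!)·e^λ. -/
open MeasureTheory
open scoped ENNReal

/-- If all descending factorial moments of an `ℕ`-valued random variable `N` are bounded
by `λ^m`, then `P(N = n) ≤ (λ^n / n!) e^λ`. -/
theorem prob_eq_le_of_factorial_moments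
    {Ω : Type*} [MeasurableSpace Ω] (P : Measure Ω) [IsProbabilityMeasure P]
    (N : Ω → ℕ) (hN : Measurable N) (lam : ℝ) (hlam : 0 < lam)
    (hmom : ∀ m : ℕ, 1 ≤ m →
      ∫⁻ ω, ((N ω).descFactorial m : ℝ≥0∞) ∂P ≤ ENNReal.ofReal (lam ^ m)) :
    ∀ n : ℕ, P {ω | N ω = n} ≤ ENNReal.ofReal (lam ^ n / n.factorial * Real.exp lam) := by
  intro n
  have hexp : (1 : ℝ) ≤ Real.exp lam := by
    have := Real.add_one_le_exp lam; linarith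
  rcases Nat.eq_zero_or_pos n with rfl | hn
  · calc P {ω | N ω = 0} ≤ 1 := prob_le_one
    _ ≤ ENNReal.ofReal (lam ^ 0 / Nat.factorial 0 * Real.exp lam) := by
        simp only [pow_zero, Nat.factorial_zero, Nat.cast_one, div_one, one_mul]
        rw [← ENNReal.ofReal_one]
        exact ENNReal.ofReal_le_ofReal hexp
  · have hA : MeasurableSet {ω | N ω = n} := hN (measurableSet_singleton n)
    have key : (n.factorial : ℝ≥0∞) * P {ω | N ω = n}
        ≤ ∫⁻ ω, ((N ω).descFactorial n : ℝ≥0∞) ∂P := by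
      calc (n.factorial : ℝ≥0∞) * P {ω | N ω = n}
          = ∫⁻ ω in {ω | N ω = n}, (n.factorial : ℝ≥0∞) ∂P := by
            rw [setLIntegral_const, mul_comm]
        _ ≤ ∫⁻ ω in {ω | N ω = n}, ((N ω).descFactorial n : ℝ≥0∞) ∂P := by
            refine setLIntegral_mono' hA fun ω hω => ?_
            simp only [Set.mem_setOf_eq] at hω
            rw [hω, Nat.descFactorial_self]
        _ ≤ ∫⁻ ω, ((N ω).descFactorial n : ℝ≥0∞) ∂P := setLIntegral_le_lintegral _ _
    have key2 : (n.factorial : ℝ≥0∞) * P {ω | N ω = n} ≤ ENNReal.ofReal (lam ^ n) :=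
      key.trans (hmom n hn)
    have hfne : (n.factorial : ℝ≥0∞) ≠ 0 := by
      exact_mod_cast (Nat.factorial_pos n).ne'
    have hftop : (n.factorial : ℝ≥0∞) ≠ ⊤ := ENNReal.natCast_ne_top _
    have hdiv : P {ω | N ω = n} ≤ ENNReal.ofReal (lam ^ n) / (n.factorial : ℝ≥0∞) :=
      (ENNReal.le_div_iff_mul_le (Or.inl hfne) (Or.inl hftop)).mpr
        (by rwa [mul_comm])
    refine hdiv.trans ?_
    have hcast : ((n.factorial : ℝ≥0∞)) = ENNReal.ofReal (n.factorial : ℝ) := by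
      rw [ENNReal.ofReal_natCast]
    rw [hcast, ← ENNReal.ofReal_div_of_pos (by exact_mod_cast Nat.factorial_pos n)]
    apply ENNReal.ofReal_le_ofReal
    have hnn : 0 ≤ lam ^ n / (n.factorial : ℝ) :=
      div_nonneg (pow_nonneg hlam.le n) (by positivity)
    nlinarith
end

section
/- Let (Ω, F, P) be a probability space, let N : Ω → ℕ be a random variable, and let λ > 0. Suppose that E[N(N−1)⋯(N−m+1)] ≤ λ^m for every integer m ≥ 1. Then for every integer M with M > 2eλ, P(N ≥ M) ≤ 2·(eλ/M)^M·e^λ. -/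
open MeasureTheory
open scoped ENNReal

/-- If all descending factorial moments of an `ℕ`-valued random variable `N` are bounded
by `λ^m`, then for every integer `M > 2eλ`, `P(N ≥ M) ≤ 2 (eλ/M)^M e^λ`. -/
theorem prob_tail_le_of_factorial_moments
    {Ω : Type*} [MeasurableSpace Ω] (P : Measure Ω) [IsProbabilityMeasure P]
    (N : Ω → ℕ) (hN : Measurable N) (lam : ℝ) (hlam : 0 < lam)
    (hmom : ∀ m : ℕ, 1 ≤ m →
      ∫⁻ ω, ((N ω).descFactorial m : ℝ≥0∞) ∂P ≤ ENNReal.ofReal (lam ^ m))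
    (M : ℕ) (hM : 2 * Real.exp 1 * lam < (M : ℝ)) :
    P {ω | M ≤ N ω} ≤
      ENNReal.ofReal (2 * (Real.exp 1 * lam / M) ^ M * Real.exp lam) := by
  have hMpos : 0 < M := by
    by_contra h
    push_neg at h
    interval_cases M
    simp only [Nat.cast_zero] at hM
    nlinarith [Real.exp_pos 1]
  have hS : MeasurableSet {ω | M ≤ N ω} := hN measurableSet_Ici
  -- Step 1: M! * P(N ≥ M) ≤ λ^M
  have key : (M.factorial : ℝ≥0∞) * P {ω | M ≤ N ω} ≤ ENNReal.ofReal (lam ^ M) := by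
    have h1 : (M.factorial : ℝ≥0∞) * P {ω | M ≤ N ω}
        = ∫⁻ ω in {ω | M ≤ N ω}, (M.factorial : ℝ≥0∞) ∂P := by
      rw [setLIntegral_const]
    rw [h1]
    refine le_trans ?_ (hmom M hMpos)
    refine le_trans (setLIntegral_mono (by fun_prop) ?_) (setLIntegral_le_lintegral _ _)
    intro ω hω
    have : M.factorial ≤ (N ω).descFactorial M := by
      rw [Nat.descFactorial_eq_factorial_mul_choose]
      have := Nat.choose_pos (hω : M ≤ N ω)
      calc M.factorial = M.factorial * 1 := (mul_one _).symm
        _ ≤ M.factorial * (N ω).choose M := by exact Nat.mul_le_mul_left _ this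
    exact_mod_cast Nat.cast_le.mpr this
  -- Step 2: deduce P ≤ ofReal (λ^M / M!)
  have hfac : (0:ℝ) < M.factorial := by exact_mod_cast M.factorial_pos
  have hP : P {ω | M ≤ N ω} ≤ ENNReal.ofReal (lam ^ M / M.factorial) := by
    have hne : (M.factorial : ℝ≥0∞) ≠ 0 := by exact_mod_cast M.factorial_ne_zero
    have htop : (M.factorial : ℝ≥0∞) ≠ ⊤ := ENNReal.natCast_ne_top _
    rw [ENNReal.ofReal_div_of_pos hfac, ENNReal.ofReal_natCast,
      ENNReal.le_div_iff_mul_le (Or.inl hne) (Or.inl htop), mul_comm]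
    exact key
  refine hP.trans (ENNReal.ofReal_le_ofReal ?_)
  -- Step 3: real inequality λ^M/M! ≤ 2 (eλ/M)^M e^λ
  have hMr : (0:ℝ) < M := by exact_mod_cast hMpos
  have hexp : ((M:ℝ)) ^ M / M.factorial ≤ Real.exp M := Real.pow_div_factorial_le_exp (M:ℝ) (le_of_lt hMr) M
  have hMM : ((M:ℝ)/Real.exp 1) ^ M ≤ M.factorial := by
    rw [div_pow, div_le_iff₀ (by positivity), ← Real.exp_nat_mul, mul_one]
    rw [div_le_iff₀ hfac] at hexp
    linarith
  have h1 : lam ^ M / M.factorial ≤ (Real.exp 1 * lam / M) ^ M := by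
    rw [div_le_iff₀ hfac]
    calc lam ^ M = ((Real.exp 1 * lam / M) * ((M:ℝ)/Real.exp 1)) ^ M := by
          congr 1; field_simp
      _ = (Real.exp 1 * lam / M) ^ M * ((M:ℝ)/Real.exp 1) ^ M := mul_pow _ _ _
      _ ≤ (Real.exp 1 * lam / M) ^ M * M.factorial := by
          refine mul_le_mul_of_nonneg_left hMM (by positivity)
  refine h1.trans ?_
  have h2 : (1:ℝ) ≤ 2 * Real.exp lam := by nlinarith [Real.one_le_exp hlam.le]
  nlinarith [pow_nonneg (by positivity : (0:ℝ) ≤ Real.exp 1 * lam / M) M, Real.exp_pos lam]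
end

section
/- Let d ≥ 1, let ℓ, ε be reals with ℓ > 2ε > 0, and let c ∈ ℝ. Let v : (0,∞) → ℝ ∪ {+∞} satisfy v(r) ≤ −c for all r ∈ [ℓ−2ε, ℓ+2ε] and v(r) ≤ 0 for all r ≥ ℓ−2ε. Let S ⊆ ℤ^d be a finite nonempty nearest-neighbor connected set with n = |S| elements. For each k ∈ S let u_k := ℓk + (ℓ/2)(1,…,1) be the center of the cube C(k) = [k₁ℓ,(k₁+1)ℓ)×⋯×[k_dℓ,(k_d+1)ℓ), and let x_k ∈ ℝ^d satisfy |x_k − u_k| < ε. Then the total pair energy satisfies Σ_{{k,k'} ⊆ S, k ≠ k'} v(|x_k − x_{k'}|) ≤ −c·(n − 1), the sum being over unordered pairs of distinct elements of S. -/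
/-- Two lattice sites are nearest neighbors if their Euclidean distance is 1. -/
def latNN {d : ℕ} (a b : Fin d → ℤ) : Prop :=
  (∑ i, (a i - b i) ^ 2) = 1

/-- A set of lattice sites is (nearest-neighbor) connected if any two of its points are
joined by a nearest-neighbor path within the set. -/
def latConn {d : ℕ} (S : Set (Fin d → ℤ)) : Prop :=
  ∀ a ∈ S, ∀ b ∈ S,
    Relation.ReflTransGen (fun p q => p ∈ S ∧ q ∈ S ∧ latNN p q) a b

/-- The center of the cube `C(k) = [k₁ℓ,(k₁+1)ℓ) × ⋯ × [k_dℓ,(k_d+1)ℓ)`. -/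
noncomputable def cubeCenter {d : ℕ} (ℓ : ℝ) (kk : Fin d → ℤ) : EuclideanSpace ℝ (Fin d) :=
  WithLp.toLp 2 (fun i => ℓ * kk i + ℓ / 2)

lemma centerDist {d : ℕ} (ℓ : ℝ) (hℓ : 0 < ℓ) (a b : Fin d → ℤ) :
    dist (cubeCenter ℓ a) (cubeCenter ℓ b)
      = ℓ * Real.sqrt (∑ i, (((a i - b i : ℤ)) : ℝ) ^ 2) := by
  rw [EuclideanSpace.dist_eq]
  have h : ∀ i : Fin d, dist (cubeCenter ℓ a i) (cubeCenter ℓ b i) ^ 2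
      = ℓ ^ 2 * (((a i - b i : ℤ)) : ℝ) ^ 2 := by
    intro i
    rw [Real.dist_eq, sq_abs]
    simp only [cubeCenter, PiLp.toLp_apply]
    push_cast
    ring
  rw [Finset.sum_congr rfl (fun i _ => h i), ← Finset.mul_sum,
    Real.sqrt_mul (sq_nonneg ℓ), Real.sqrt_sq hℓ.le]

lemma nsmul_coe_ereal (m : ℕ) (r : ℝ) : m • ((r : ℝ) : EReal) = (((m : ℝ) * r : ℝ) : EReal) := by
  induction m with
  | zero => simp
  | succ p ih =>
    rw [succ_nsmul, ih, ← EReal.coe_add]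
    congr 1
    push_cast
    ring


/-- Energy estimate: if each `x_k` lies within `ε` of the center of the cube `C(k)` for
`k` ranging over a finite nonempty nearest-neighbor connected set of `n` cubes, then the
total pair energy (sum over unordered pairs) is at most `-c(n-1)`. -/
theorem energy_estimate_connected_cubes
    (d : ℕ) (hd : 1 ≤ d) (ℓ ε c : ℝ) (hε : 0 < ε) (hℓ : 2 * ε < ℓ)
    (v : ℝ → EReal)
    (hv1 : ∀ r : ℝ, ℓ - 2 * ε ≤ r → r ≤ ℓ + 2 * ε → v r ≤ ((-c : ℝ) : EReal))
    (hv2 : ∀ r : ℝ, ℓ - 2 * ε ≤ r → v r ≤ 0)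
    (n : ℕ) (hn : 1 ≤ n)
    (k : Fin n → (Fin d → ℤ)) (hinj : Function.Injective k)
    (hconn : latConn (Set.range k))
    (x : Fin n → EuclideanSpace ℝ (Fin d))
    (hx : ∀ i, dist (x i) (cubeCenter ℓ (k i)) < ε) :
    (∑ p ∈ Finset.univ.filter (fun p : Fin n × Fin n => p.1 < p.2),
        v (dist (x p.1) (x p.2)))
      ≤ ((-c * ((n : ℝ) - 1) : ℝ) : EReal) := by
  classical
  have hℓpos : 0 < ℓ := by linarith
  -- distance bounds
  have hlow : ∀ i j : Fin n, i ≠ j → ℓ - 2 * ε ≤ dist (x i) (x j) := by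
    intro i j hij
    have hk : k i ≠ k j := fun h => hij (hinj h)
    have hsum : (1 : ℝ) ≤ ∑ m, (((k i m - k j m : ℤ)) : ℝ) ^ 2 := by
      have : ∃ m, k i m ≠ k j m := by
        by_contra h
        push_neg at h
        exact hk (funext h)
      obtain ⟨m, hm⟩ := this
      have h1 : (1 : ℤ) ≤ (k i m - k j m) ^ 2 := by
        have h := Int.one_le_abs (sub_ne_zero.mpr hm)
        nlinarith [sq_abs (k i m - k j m), h]
      have h1' : (1 : ℝ) ≤ (((k i m - k j m : ℤ)) : ℝ) ^ 2 := by exact_mod_cast h1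
      calc (1 : ℝ) ≤ (((k i m - k j m : ℤ)) : ℝ) ^ 2 := h1'
        _ ≤ ∑ m, (((k i m - k j m : ℤ)) : ℝ) ^ 2 :=
          Finset.single_le_sum (f := fun m => (((k i m - k j m : ℤ)) : ℝ) ^ 2)
            (fun i _ => sq_nonneg _) (Finset.mem_univ m)
    have hc : ℓ ≤ dist (cubeCenter ℓ (k i)) (cubeCenter ℓ (k j)) := by
      rw [centerDist ℓ hℓpos]
      have : (1 : ℝ) ≤ Real.sqrt (∑ m, (((k i m - k j m : ℤ)) : ℝ) ^ 2) := by
        rw [show (1:ℝ) = Real.sqrt 1 by simp]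
        exact Real.sqrt_le_sqrt hsum
      nlinarith
    have tri : dist (cubeCenter ℓ (k i)) (cubeCenter ℓ (k j))
        ≤ dist (cubeCenter ℓ (k i)) (x i) + dist (x i) (x j)
          + dist (x j) (cubeCenter ℓ (k j)) := dist_triangle4 _ _ _ _
    have h1 := hx i
    have h2 := hx j
    rw [dist_comm] at h1
    linarith
  have hhigh : ∀ i j : Fin n, latNN (k i) (k j) → dist (x i) (x j) ≤ ℓ + 2 * ε := by
    intro i j hnn
    have hsum : (∑ m, (((k i m - k j m : ℤ)) : ℝ) ^ 2) = 1 := by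
      have h2 : ((∑ m, (k i m - k j m) ^ 2 : ℤ) : ℝ) = ((1 : ℤ) : ℝ) := by
        exact_mod_cast congrArg (fun t : ℤ => (t : ℝ)) hnn
      push_cast at h2
      convert h2 using 2 with m
      push_cast
      ring
    have hc : dist (cubeCenter ℓ (k i)) (cubeCenter ℓ (k j)) = ℓ := by
      rw [centerDist ℓ hℓpos, hsum]
      simp
    have tri : dist (x i) (x j)
        ≤ dist (x i) (cubeCenter ℓ (k i)) + dist (cubeCenter ℓ (k i)) (cubeCenter ℓ (k j))
          + dist (cubeCenter ℓ (k j)) (x j) := dist_triangle4 _ _ _ _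
    have h1 := hx i
    have h2 := hx j
    rw [dist_comm] at h2
    linarith
  -- the graph
  let G : SimpleGraph (Fin n) :=
    { Adj := fun a b => latNN (k a) (k b)
      symm := by
        refine ⟨fun a b hab => ?_⟩
        unfold latNN at *
        rw [← hab]
        exact Finset.sum_congr rfl (fun i _ => by ring
        )
      loopless := by
        refine ⟨fun a ha => ?_⟩
        unfold latNN at ha
        simp at ha }
  have hAdjNe : ∀ {a b : Fin n}, G.Adj a b → a ≠ b := by
    intro a b hab h
    exact G.loopless.irrefl a (h ▸ hab)
  -- root
  let z : Fin n := ⟨0, hn⟩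
  -- reachability
  have hreach : ∀ i : Fin n, G.Reachable i z := by
    intro i
    have h := hconn (k i) ⟨i, rfl⟩ (k z) ⟨z, rfl⟩
    have key : ∀ b, Relation.ReflTransGen
        (fun p q => p ∈ Set.range k ∧ q ∈ Set.range k ∧ latNN p q) (k i) b →
        ∀ j : Fin n, k j = b → G.Reachable i j := by
      intro b hb
      induction hb with
      | refl => intro j hj; rw [hinj hj]
      | tail hab hbc ih =>
        intro j hj
        obtain ⟨hbS, hcS, hnn⟩ := hbc
        obtain ⟨jb, hjb⟩ := hbS
        refine (ih jb hjb).trans ?_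
        have : G.Adj jb j := by
          show latNN (k jb) (k j)
          rw [hjb, hj]
          exact hnn
        exact this.reachable
    exact key (k z) h z rfl
  -- parent map
  have hparent : ∀ i : Fin n, ∃ j : Fin n, i ≠ z →
      G.Adj i j ∧ G.dist j z < G.dist i z := by
    intro i
    by_cases hi : i = z
    · exact ⟨z, fun h => absurd hi h⟩
    · have hr := hreach i
      have hpos : 0 < G.dist i z := hr.pos_dist_of_ne hi
      obtain ⟨p, hp⟩ := hr.exists_walk_length_eq_dist
      cases p with
      | nil => exact absurd rfl hi
      | cons hadj q =>
        rename_i b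
        refine ⟨b, fun _ => ⟨hadj, ?_⟩⟩
        have := SimpleGraph.dist_le q
        simp [SimpleGraph.Walk.length_cons] at hp
        omega
  choose f hf using hparent
  -- the edge pairs
  let g : Fin n → Fin n × Fin n := fun i => if i < f i then (i, f i) else (f i, i)
  let T : Finset (Fin n × Fin n) := (Finset.univ.erase z).image g
  have hinjOn : Set.InjOn g ((Finset.univ.erase z) : Finset (Fin n)) := by
    intro a ha b hb hab
    have haz : a ≠ z := (Finset.mem_erase.mp (Finset.mem_coe.mp ha)).1
    have hbz : b ≠ z := (Finset.mem_erase.mp (Finset.mem_coe.mp hb)).1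
    have hfa := hf a haz
    have hfb := hf b hbz
    by_contra hne
    have swap : a = f b ∧ f a = b := by
      simp only [g] at hab
      split_ifs at hab with h1 h2 h2 <;>
        obtain ⟨e1, e2⟩ := Prod.ext_iff.mp hab
      · exact absurd e1 hne
      · exact ⟨e1, e2⟩
      · exact ⟨e2, e1⟩
      · exact absurd e2 hne
    obtain ⟨h1, h2⟩ := swap
    have d1 := hfa.2
    have d2 := hfb.2
    rw [h2] at d1
    rw [← h1] at d2
    omega
  have hTcard : T.card = n - 1 := by
    rw [Finset.card_image_of_injOn hinjOn, Finset.card_erase_of_mem (Finset.mem_univ z),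
      Finset.card_univ, Fintype.card_fin]
  -- T is inside the pair set, and pairs in T are NN
  set P : Finset (Fin n × Fin n) := Finset.univ.filter (fun p : Fin n × Fin n => p.1 < p.2) with hP
  have hTP : T ⊆ P := by
    intro p hp
    obtain ⟨i, hi, rfl⟩ := Finset.mem_image.mp hp
    have hiz : i ≠ z := (Finset.mem_erase.mp hi).1
    have hadj := (hf i hiz).1
    have hne : i ≠ f i := hAdjNe hadj
    simp only [hP, Finset.mem_filter, Finset.mem_univ, true_and, g]
    split_ifs with h
    · exact h
    · exact lt_of_le_of_ne (not_lt.mp h) (Ne.symm hne)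
  have hTNN : ∀ p ∈ T, latNN (k p.1) (k p.2) := by
    intro p hp
    obtain ⟨i, hi, rfl⟩ := Finset.mem_image.mp hp
    have hiz : i ≠ z := (Finset.mem_erase.mp hi).1
    have hadj := (hf i hiz).1
    simp only [g]
    split_ifs with h
    · exact hadj
    · exact hadj.symm
  -- bound each term
  have hboundT : ∀ p ∈ T, v (dist (x p.1) (x p.2)) ≤ ((-c : ℝ) : EReal) := by
    intro p hp
    have hpP := hTP hp
    have hlt : p.1 < p.2 := (Finset.mem_filter.mp hpP).2
    exact hv1 _ (hlow _ _ hlt.ne) (hhigh _ _ (hTNN p hp))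
  have hbound0 : ∀ p ∈ P \ T, v (dist (x p.1) (x p.2)) ≤ 0 := by
    intro p hp
    have hpP := (Finset.mem_sdiff.mp hp).1
    have hlt : p.1 < p.2 := (Finset.mem_filter.mp hpP).2
    exact hv2 _ (hlow _ _ hlt.ne)
  -- combine
  calc (∑ p ∈ P, v (dist (x p.1) (x p.2)))
      = (∑ p ∈ P \ T, v (dist (x p.1) (x p.2))) + (∑ p ∈ T, v (dist (x p.1) (x p.2))) :=
        (Finset.sum_sdiff hTP).symm
    _ ≤ 0 + (∑ p ∈ T, ((-c : ℝ) : EReal)) := by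
        apply add_le_add
        · exact Finset.sum_nonpos hbound0
        · exact Finset.sum_le_sum hboundT
    _ = (((n - 1 : ℕ) : ℝ) * (-c) : ℝ) := by
        rw [Finset.sum_const, hTcard, nsmul_coe_ereal, zero_add]
    _ = ((-c * ((n : ℝ) - 1) : ℝ) : EReal) := by
        congr 1
        rw [Nat.cast_sub hn]
        push_cast
        ring
end

section
/- Let d ≥ 1, R > 0 and let k ≥ 1 be an integer. Let Λ ⊆ ℝ^d, and let ω, ω' ⊆ ℝ^d be sets with ω ∩ Λ = ω' ∩ Λ. Let x ∈ ω ∩ Λ be a point whose Euclidean distance to the complement ℝ^d ∖ Λ is strictly greater than kR. Then the cluster of x in ω ∩ Λ has exactly k points if and only if the cluster of x in ω' has exactly k points (and in that case the two clusters coincide). -/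
/-- The connection relation: `a` and `b` are distinct points of the configuration `ω`
at Euclidean distance at most `R`. -/
def connRel {d : ℕ} (R : ℝ) (ω : Set (EuclideanSpace ℝ (Fin d)))
    (a b : EuclideanSpace ℝ (Fin d)) : Prop :=
  a ∈ ω ∧ b ∈ ω ∧ a ≠ b ∧ dist a b ≤ R

/-- The cluster `C_ω(x)`: the set of points of `ω` connected to `x` in the geometric
graph `G_ω` with connection radius `R`. -/
def cluster {d : ℕ} (R : ℝ) (ω : Set (EuclideanSpace ℝ (Fin d)))
    (x : EuclideanSpace ℝ (Fin d)) : Set (EuclideanSpace ℝ (Fin d)) :=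
  {y | y ∈ ω ∧ Relation.ReflTransGen (connRel R ω) x y}


/-- `y` is reachable from `x` in at most `n` steps of the relation `r`. -/
def reachN {α : Type*} (r : α → α → Prop) (x : α) : ℕ → α → Prop
  | 0, y => y = x
  | n+1, y => reachN r x n y ∨ ∃ z, reachN r x n z ∧ r z y

lemma reflTransGen_iff_reachN {α : Type*} (r : α → α → Prop) (x y : α) :
    Relation.ReflTransGen r x y ↔ ∃ n, reachN r x n y := by
  constructor
  · intro h
    induction h with
    | refl => exact ⟨0, rfl⟩
    | tail hab hbc ih =>
      obtain ⟨n, hn⟩ := ih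
      exact ⟨n + 1, Or.inr ⟨_, hn, hbc⟩⟩
  · rintro ⟨n, hn⟩
    induction n generalizing y with
    | zero => rw [show y = x from hn]
    | succ n ih =>
      rcases hn with h | ⟨z, hz, hzy⟩
      · exact ih _ h
      · exact (ih _ hz).tail hzy

lemma reachN_add {α : Type*} {r : α → α → Prop} {x : α} {n : ℕ} {y : α}
    (h : reachN r x n y) (m : ℕ) : reachN r x (n + m) y := by
  induction m with
  | zero => exact h
  | succ m ih => exact Or.inl ih

lemma reachN_stable {α : Type*} {r : α → α → Prop} {x : α} {n : ℕ}
    (h : ∀ y, reachN r x (n+1) y → reachN r x n y) :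
    ∀ m y, reachN r x (n + m) y → reachN r x n y := by
  intro m
  induction m with
  | zero => exact fun y hy => hy
  | succ m ih =>
    intro y hy
    rcases hy with h1 | ⟨z, hz, hzy⟩
    · exact ih y h1
    · exact h y (Or.inr ⟨z, ih z hz, hzy⟩)

lemma reachN_dist {α : Type*} [PseudoMetricSpace α] {r : α → α → Prop} {R : ℝ}
    (hR : 0 ≤ R) (hr : ∀ a b, r a b → dist a b ≤ R) (x : α) :
    ∀ n y, reachN r x n y → dist x y ≤ n * R := by
  intro n
  induction n with
  | zero =>
    intro y hy
    rw [show y = x from hy]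
    simp
  | succ n ih =>
    intro y hy
    rcases hy with h | ⟨z, hz, hzy⟩
    · calc dist x y ≤ n * R := ih y h
        _ ≤ ((n+1 : ℕ) : ℝ) * R := by push_cast; nlinarith
    · calc dist x y ≤ dist x z + dist z y := dist_triangle _ _ _
        _ ≤ n * R + R := add_le_add (ih z hz) (hr _ _ hzy)
        _ = ((n : ℝ) + 1) * R := by ring
        _ = ((n + 1 : ℕ) : ℝ) * R := by push_cast; ring

/-- If the reachability set of `x` is finite with `k` elements, then every reachable
point is within distance `(k-1) * R` of `x`. -/
lemma reach_dist_bound {α : Type*} [PseudoMetricSpace α] {r : α → α → Prop} {R : ℝ}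
    (hR : 0 ≤ R) (hr : ∀ a b, r a b → dist a b ≤ R) (x : α) {k : ℕ} (hk : 1 ≤ k)
    (hfin : {y | Relation.ReflTransGen r x y}.Finite)
    (hcard : {y | Relation.ReflTransGen r x y}.ncard = k) :
    ∀ y, Relation.ReflTransGen r x y → dist x y ≤ ((k - 1 : ℕ) : ℝ) * R := by
  set D := {y | Relation.ReflTransGen r x y} with hD
  set S : ℕ → Set α := fun n => {y | reachN r x n y} with hS
  have hSD : ∀ n, S n ⊆ D := fun n y hy => (reflTransGen_iff_reachN r x y).mpr ⟨n, hy⟩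
  have hSfin : ∀ n, (S n).Finite := fun n => hfin.subset (hSD n)
  have key : ∃ n ≤ k - 1, ∀ y, reachN r x (n+1) y → reachN r x n y := by
    by_contra hcon
    push_neg at hcon
    have grow : ∀ n ≤ k, n + 1 ≤ (S n).ncard := by
      intro n hn
      induction n with
      | zero =>
        have hx0 : x ∈ S 0 := rfl
        have := (Set.ncard_pos (hSfin 0)).mpr ⟨x, hx0⟩
        omega
      | succ n ih =>
        have hn' : n ≤ k - 1 := by omega
        obtain ⟨y, hy1, hy2⟩ := hcon n hn'
        have hsub : S n ⊂ S (n+1) := by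
          constructor
          · intro z hz; exact Or.inl hz
          · intro hle; exact hy2 (hle hy1)
        have := Set.ncard_lt_ncard hsub (hSfin (n+1))
        have := ih (by omega)
        omega
    have h1 : k + 1 ≤ (S k).ncard := grow k le_rfl
    have h2 : (S k).ncard ≤ D.ncard := Set.ncard_le_ncard (hSD k) hfin
    omega
  obtain ⟨n, hn, hstab⟩ := key
  intro y hy
  obtain ⟨m, hm⟩ := (reflTransGen_iff_reachN r x y).mp hy
  have hmn : reachN r x (n + m) y := by
    rw [Nat.add_comm]; exact reachN_add hm n
  have hny : reachN r x n y := reachN_stable hstab m y hmn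
  calc dist x y ≤ n * R := reachN_dist hR hr x n y hny
    _ ≤ ((k - 1 : ℕ) : ℝ) * R :=
      mul_le_mul_of_nonneg_right (Nat.cast_le.mpr hn) hR

lemma cluster_eq_reach {d : ℕ} {R : ℝ} {ω : Set (EuclideanSpace ℝ (Fin d))}
    {x : EuclideanSpace ℝ (Fin d)} (hx : x ∈ ω) :
    cluster R ω x = {y | Relation.ReflTransGen (connRel R ω) x y} := by
  ext y
  constructor
  · exact fun h => h.2
  · intro h
    refine ⟨?_, h⟩
    rcases Relation.ReflTransGen.cases_tail h with rfl | ⟨z, _, hzy⟩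
    · exact hx
    · exact hzy.2.1

lemma cluster_dist_le {d : ℕ} {R : ℝ} (hR : 0 ≤ R) {ω : Set (EuclideanSpace ℝ (Fin d))}
    {x : EuclideanSpace ℝ (Fin d)} (hx : x ∈ ω) {k : ℕ} (hk : 1 ≤ k)
    (hfin : (cluster R ω x).Finite) (hcard : (cluster R ω x).ncard = k) :
    ∀ y ∈ cluster R ω x, dist x y ≤ ((k - 1 : ℕ) : ℝ) * R := by
  have he := cluster_eq_reach (R := R) hx
  rw [he] at hfin hcard
  intro y hy
  exact reach_dist_bound hR (fun a b hab => hab.2.2.2) x hk hfin hcard y hy.2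

/-- Locality of the `k`-cluster property: if `ω` and `ω'` agree inside `Λ` and `x ∈ ω ∩ Λ`
is at distance greater than `kR` from the complement of `Λ`, then the cluster of `x` in
`ω ∩ Λ` has exactly `k` points iff the cluster of `x` in `ω'` does, and in that case the
two clusters coincide. -/
theorem cluster_locality
    (d : ℕ) (hd : 1 ≤ d) (R : ℝ) (hR : 0 < R) (k : ℕ) (hk : 1 ≤ k)
    (Λ ω ω' : Set (EuclideanSpace ℝ (Fin d))) (hωω' : ω ∩ Λ = ω' ∩ Λ)
    (x : EuclideanSpace ℝ (Fin d)) (hx : x ∈ ω ∩ Λ)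
    (hdist : (k : ℝ) * R < Metric.infDist x Λᶜ) :
    ((cluster R (ω ∩ Λ) x).Finite ∧ (cluster R (ω ∩ Λ) x).ncard = k ↔
      (cluster R ω' x).Finite ∧ (cluster R ω' x).ncard = k) ∧
    ((cluster R (ω ∩ Λ) x).Finite ∧ (cluster R (ω ∩ Λ) x).ncard = k →
      cluster R (ω ∩ Λ) x = cluster R ω' x) := by
  obtain ⟨hxω, hxΛ⟩ := hx
  have hxm : x ∈ ω ∩ Λ := ⟨hxω, hxΛ⟩
  have hxω' : x ∈ ω' := (hωω' ▸ hxm).1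
  have hsub : ω ∩ Λ ⊆ ω' := by rw [hωω']; exact Set.inter_subset_left
  have hmono : cluster R (ω ∩ Λ) x ⊆ cluster R ω' x := by
    rintro y ⟨hy, hp⟩
    exact ⟨hsub hy, Relation.ReflTransGen.mono (r := connRel R (ω ∩ Λ)) (p := connRel R ω') (fun a b hab => ⟨hsub hab.1, hsub hab.2.1, hab.2.2⟩) x y hp⟩
  have hRnn : (0 : ℝ) ≤ R := hR.le
  have hkR : ((k - 1 : ℕ) : ℝ) * R + R = (k : ℝ) * R := by
    rw [Nat.cast_sub hk]; push_cast; ring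
  have hkR' : ((k - 1 : ℕ) : ℝ) * R ≤ (k : ℝ) * R :=
    mul_le_mul_of_nonneg_right (by exact_mod_cast Nat.cast_le.mpr (Nat.sub_le k 1)) hRnn
  have hΛmem : ∀ y : EuclideanSpace ℝ (Fin d), dist x y ≤ (k : ℝ) * R → y ∈ Λ := by
    intro y hy
    by_contra hyc
    have hyc' : y ∈ Λᶜ := hyc
    have := Metric.infDist_le_dist_of_mem (x := x) hyc'
    linarith
  have key1 : (cluster R (ω ∩ Λ) x).Finite → (cluster R (ω ∩ Λ) x).ncard = k →
      cluster R (ω ∩ Λ) x = cluster R ω' x := by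
    intro hf hc
    have hb := cluster_dist_le hRnn hxm hk hf hc
    refine Set.Subset.antisymm hmono ?_
    rintro y ⟨hyω', hp⟩
    clear hyω'
    induction hp with
    | refl => exact ⟨hxm, Relation.ReflTransGen.refl⟩
    | @tail b c hab hbc ih =>
      obtain ⟨hbω', hcω', hne, hd⟩ := hbc
      have hdc : dist x c ≤ (k : ℝ) * R := by
        calc dist x c ≤ dist x b + dist b c := dist_triangle _ _ _
          _ ≤ ((k - 1 : ℕ) : ℝ) * R + R := add_le_add (hb b ih) hd
          _ = (k : ℝ) * R := hkR
      have hcm : c ∈ ω ∩ Λ := by rw [hωω']; exact ⟨hcω', hΛmem c hdc⟩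
      exact ⟨hcm, ih.2.tail ⟨ih.1, hcm, hne, hd⟩⟩
  have key2 : (cluster R ω' x).Finite → (cluster R ω' x).ncard = k →
      cluster R ω' x = cluster R (ω ∩ Λ) x := by
    intro hf hc
    have hb := cluster_dist_le hRnn hxω' hk hf hc
    refine Set.Subset.antisymm ?_ hmono
    rintro y ⟨hyω', hp⟩
    clear hyω'
    induction hp with
    | refl => exact ⟨hxm, Relation.ReflTransGen.refl⟩
    | @tail b c hab hbc ih =>
      obtain ⟨hbω', hcω', hne, hd⟩ := hbc
      have hcC : c ∈ cluster R ω' x := ⟨hcω', hab.tail ⟨hbω', hcω', hne, hd⟩⟩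
      have hcm : c ∈ ω ∩ Λ := by
        rw [hωω']; exact ⟨hcω', hΛmem c (le_trans (hb c hcC) hkR')⟩
      exact ⟨hcm, ih.2.tail ⟨ih.1, hcm, hne, hd⟩⟩
  constructor
  · constructor
    · rintro ⟨hf, hc⟩
      rw [← key1 hf hc]
      exact ⟨hf, hc⟩
    · rintro ⟨hf, hc⟩
      rw [← key2 hf hc]
      exact ⟨hf, hc⟩
  · rintro ⟨hf, hc⟩
    exact key1 hf hc
end

section
/- Let d ≥ 1, let v : (0,∞) → ℝ ∪ {+∞} be measurable, and for x₁,…,x_k ∈ ℝ^d set U(x₁,…,x_k) := Σ_{1≤i<j≤k} v(|x_i − x_j|). Let E_k := inf{U(x₁,…,x_k) : x₁,…,x_k ∈ ℝ^d} (with E₁ := 0), and assume e_∞ := inf_{k≥1} E_k/k > −∞. Fix R > 0 and β > 0. Then for every k ≥ 1 the cluster partition function satisfies Z_k^cl(β) ≤ exp(−βk·e_∞)·e^k·|B(0,R)|^{k−1}, where |B(0,R)| is the Lebesgue measure of the Euclidean ball of radius R in ℝ^d. -/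
open MeasureTheory
open scoped ENNReal

noncomputable section

/-- Total pair energy `U(x₁,…,x_m) = Σ_{i<j} v(|x_i - x_j|)` of a finite configuration,
with values in `ℝ ∪ {±∞}`. -/
def pairEnergy {d : ℕ} (v : ℝ → EReal) {m : ℕ}
    (f : Fin m → EuclideanSpace ℝ (Fin d)) : EReal :=
  ∑ p ∈ Finset.univ.filter (fun p : Fin m × Fin m => p.1 < p.2),
    v (dist (f p.1) (f p.2))

/-- Boltzmann weight `exp(-βE)` with the convention `exp(-∞) = 0` (for `E = +∞`). -/
def boltz (β : ℝ) (E : EReal) : ℝ≥0∞ :=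
  if E = ⊤ then 0 else ENNReal.ofReal (Real.exp (-β * E.toReal))

/-- A finite set `S ⊆ ℝ^d` is `R`-connected if the graph on `S` with an edge between
distinct points at distance `≤ R` is connected. -/
def RConn {d : ℕ} (R : ℝ) (S : Set (EuclideanSpace ℝ (Fin d))) : Prop :=
  ∀ a ∈ S, ∀ b ∈ S,
    Relation.ReflTransGen (fun p q => p ∈ S ∧ q ∈ S ∧ p ≠ q ∧ dist p q ≤ R) a b

/-- The cluster partition function `Z_k^cl(β)` for `k = j+1` particles:
`Z_k^cl(β) = (1/k!) ∫ exp(-βU(0,x₂,…,x_k)) 1({0,x₂,…,x_k} R-connected) dx₂⋯dx_k`. -/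
def Zcl (d : ℕ) (v : ℝ → EReal) (β R : ℝ) (j : ℕ) : ℝ≥0∞ :=
  ((j + 1).factorial : ℝ≥0∞)⁻¹ *
    ∫⁻ y : Fin j → EuclideanSpace ℝ (Fin d),
      Set.indicator
        {y : Fin j → EuclideanSpace ℝ (Fin d) |
          RConn R (Set.range (Fin.cons (0 : EuclideanSpace ℝ (Fin d)) y))}
        (fun y => boltz β (pairEnergy v (Fin.cons (0 : EuclideanSpace ℝ (Fin d)) y))) y

/-! ### Auxiliary material for the proof -/

section Aux

open Metric

/-- Abbreviation for Euclidean space. -/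
abbrev Euc (d : ℕ) := EuclideanSpace ℝ (Fin d)

/-- Prepend the origin to a configuration. -/
def cons0 {d n : ℕ} (y : Fin n → Euc d) : Fin (n+1) → Euc d := Fin.cons 0 y

@[simp] lemma cons0_zero {d n : ℕ} (y : Fin n → Euc d) : cons0 y 0 = 0 := rfl
@[simp] lemma cons0_succ {d n : ℕ} (y : Fin n → Euc d) (i : Fin n) : cons0 y i.succ = y i :=
  Fin.cons_succ _ _ _

lemma cons_cont {d n : ℕ} (m : Fin (n+1)) :
    Continuous (fun y : Fin n → Euc d => cons0 y m) := by
  rcases Fin.eq_zero_or_eq_succ m with h | ⟨i, h⟩ <;> subst h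
  · simp only [cons0_zero]; exact continuous_const
  · simp only [cons0_succ]; exact continuous_apply i

lemma closedA {d n : ℕ} (R : ℝ) (f : Fin n → Fin (n+1)) :
    IsClosed {y : Fin n → Euc d | ∀ i, dist (y i) (cons0 y (f i)) ≤ R} := by
  have : {y : Fin n → Euc d | ∀ i, dist (y i) (cons0 y (f i)) ≤ R}
      = ⋂ i, {y | dist (y i) (cons0 y (f i)) ≤ R} := by ext y; simp [Set.mem_iInter]
  rw [this]
  exact isClosed_iInter fun i =>
    isClosed_le ((continuous_apply i).dist (cons_cont (f i))) continuous_const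

lemma cons0_castdown {d n : ℕ} (y : Fin (n+1) → Euc d) (m : Fin (n+2)) (hm : (m : ℕ) ≤ n) :
    cons0 y m = cons0 (Fin.init y) ⟨(m : ℕ), by omega⟩ := by
  rcases Fin.eq_zero_or_eq_succ m with h | ⟨i, h⟩ <;> subst h
  · rfl
  · have hi : (i : ℕ) < n := by simpa using hm
    have h1 : cons0 y i.succ = y i := cons0_succ y i
    have h2 : (⟨(i.succ : ℕ), by omega⟩ : Fin (n+1)) = (⟨(i:ℕ), hi⟩ : Fin n).succ := by
      ext; simp
    rw [h1, h2, cons0_succ]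
    simp only [Fin.init]
    congr 1

/-- The key "tree-graph" volume bound, triangular case: if every particle `i` is
constrained to lie within distance `R` of a particle with strictly smaller index,
the volume of the configuration set is at most `|B(0,R)|^n`. -/
lemma tri (d : ℕ) (R : ℝ) :
    ∀ (n : ℕ) (f : Fin n → Fin (n+1)), (∀ i, (f i : ℕ) ≤ (i : ℕ)) →
    volume {y : Fin n → Euc d | ∀ i, dist (y i) (cons0 y (f i)) ≤ R}
      ≤ (volume (closedBall (0 : Euc d) R))^n := by
  intro n
  induction n with
  | zero =>
    intro f hf
    calc volume {y : Fin 0 → Euc d | ∀ i, dist (y i) (cons0 y (f i)) ≤ R}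
        ≤ volume (Set.univ : Set (Fin 0 → Euc d)) := measure_mono (Set.subset_univ _)
      _ = 1 := by rw [volume_pi, Measure.pi_univ]; simp
      _ = _ := by simp
  | succ n IH =>
    intro f hf
    set C := volume (closedBall (0 : Euc d) R) with hC
    have hlt : ∀ a : Fin n, (f a.castSucc : ℕ) < n + 1 := by
      intro a; have := hf a.castSucc; simp at this; omega
    set f' : Fin n → Fin (n+1) := fun a => ⟨(f a.castSucc : ℕ), hlt a⟩ with hf'def
    have hf' : ∀ a, (f' a : ℕ) ≤ (a : ℕ) := by
      intro a; have := hf a.castSucc; simpa [hf'def] using this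
    have hflast : (f (Fin.last n) : ℕ) < n + 1 := by
      have := hf (Fin.last n); simp at this; omega
    set fl : Fin (n+1) := ⟨(f (Fin.last n) : ℕ), hflast⟩ with hfl
    set T : Set (Euc d × (Fin n → Euc d)) :=
      {p | (∀ a, dist (p.2 a) (cons0 p.2 (f' a)) ≤ R) ∧ dist p.1 (cons0 p.2 fl) ≤ R} with hT
    have hTm : MeasurableSet T := by
      have : T = {p : Euc d × (Fin n → Euc d) | ∀ a, dist (p.2 a) (cons0 p.2 (f' a)) ≤ R}
          ∩ {p | dist p.1 (cons0 p.2 fl) ≤ R} := rfl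
      rw [this]
      refine MeasurableSet.inter ?_ ?_
      · exact (closedA R f').preimage continuous_snd |>.measurableSet
      · exact (isClosed_le (continuous_fst.dist ((cons_cont fl).comp continuous_snd))
          continuous_const).measurableSet
    set e := MeasurableEquiv.piFinSuccAbove (fun _ : Fin (n+1) => Euc d) (Fin.last n) with he
    have hme : MeasurePreserving e volume volume := volume_preserving_piFinSuccAbove _ _
    have hSeT : {y : Fin (n+1) → Euc d | ∀ i, dist (y i) (cons0 y (f i)) ≤ R} = e ⁻¹' T := by
      ext y
      have hey : e y = (y (Fin.last n), Fin.init y) := by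
        simp [he, MeasurableEquiv.piFinSuccAbove, Fin.init]
      simp only [Set.mem_setOf_eq, Set.mem_preimage, hey, hT]
      constructor
      · intro h
        refine ⟨fun a => ?_, ?_⟩
        · have := h a.castSucc
          rwa [cons0_castdown y (f a.castSucc)
            (by have := hf a.castSucc; simp at this ⊢; omega)] at this
        · have := h (Fin.last n)
          rwa [cons0_castdown y (f (Fin.last n)) (by simpa using hf (Fin.last n))] at this
      · rintro ⟨h1, h2⟩ i
        rcases Fin.eq_castSucc_or_eq_last i with ⟨a, rfl⟩ | rfl
        · have := h1 a
          rwa [← cons0_castdown y (f a.castSucc)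
            (by have := hf a.castSucc; simp at this ⊢; omega)] at this
        · rwa [← cons0_castdown y (f (Fin.last n)) (by omega)] at h2

    rw [hSeT]
    have hvol : volume (e ⁻¹' T) = ((volume : Measure (Euc d)).prod volume) T := by
      exact hme.measure_preimage hTm.nullMeasurableSet
    rw [hvol, Measure.prod_apply_symm hTm]
    set S' := {z : Fin n → Euc d | ∀ a, dist (z a) (cons0 z (f' a)) ≤ R} with hS'
    have hpt : ∀ z, volume ((fun x => (x, z)) ⁻¹' T) ≤ S'.indicator (fun _ => C) z := by
      intro z
      by_cases hz : z ∈ S'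
      · rw [Set.indicator_of_mem hz]
        have hsub : ((fun x => (x, z)) ⁻¹' T) ⊆ closedBall (cons0 z fl) R := by
          intro x hx; exact hx.2
        calc volume ((fun x => (x, z)) ⁻¹' T) ≤ volume (closedBall (cons0 z fl) R) :=
              measure_mono hsub
          _ = C := Measure.addHaar_closedBall_center _ _ _
      · rw [Set.indicator_of_notMem hz]
        have hemp : ((fun x => (x, z)) ⁻¹' T) = ∅ := by
          ext x
          simp only [Set.mem_preimage, Set.mem_empty_iff_false, iff_false]
          intro h; exact hz h.1
        simp [hemp]
    calc ∫⁻ z, volume ((fun x => (x, z)) ⁻¹' T) ∂volume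
        ≤ ∫⁻ z, S'.indicator (fun _ => C) z ∂volume := lintegral_mono hpt
      _ ≤ C * volume S' := lintegral_indicator_const_le _ _
      _ ≤ C * C^n := mul_le_mul_right (IH f' hf') _
      _ = C^(n+1) := (pow_succ' C n).symm

lemma perm_mp (d n : ℕ) (π : Equiv.Perm (Fin n)) :
    MeasurePreserving (fun y : Fin n → Euc d => y ∘ π) volume volume := by
  have h := volume_measurePreserving_piCongrLeft (fun _ : Fin n => Euc d) π.symm
  have : ⇑(MeasurableEquiv.piCongrLeft (fun _ : Fin n => Euc d) π.symm)
      = fun y : Fin n → Euc d => y ∘ π := by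
    funext y i
    simp [MeasurableEquiv.piCongrLeft, Equiv.piCongrLeft, Equiv.piCongrLeft']
  rwa [this] at h

/-- Any parent map admitting a rank function can be relabelled (by a permutation of the
non-root particles) into a triangular parent map. -/
lemma acyc_perm (d : ℕ) (R : ℝ) (n : ℕ) (f : Fin n → Fin (n+1))
    (r : Fin (n+1) → ℕ) (hr0 : r 0 = 0) (hr : ∀ i, r (f i) < r (i.succ)) :
    ∃ (f' : Fin n → Fin (n+1)) (πe : Equiv.Perm (Fin n)),
      (∀ a, (f' a : ℕ) ≤ (a : ℕ)) ∧
      {y : Fin n → Euc d | ∀ i, dist (y i) (cons0 y (f i)) ≤ R}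
        = (fun y : Fin n → Euc d => y ∘ πe) ⁻¹'
            {z | ∀ a, dist (z a) (cons0 z (f' a)) ≤ R} := by
  set σ : Equiv.Perm (Fin (n+1)) := Tuple.sort r with hσdef
  have hmono : Monotone (r ∘ σ) := Tuple.monotone_sort r
  have hσ0 : σ 0 = 0 := by
    have h1 : r (σ 0) = 0 := by
      have h := hmono (Fin.zero_le (σ.symm 0))
      simp only [Function.comp_apply, Equiv.apply_symm_apply, hr0] at h
      omega
    by_contra hne
    obtain ⟨i, hi⟩ := Fin.eq_succ_of_ne_zero hne
    have h2 := hr i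
    rw [← hi, h1] at h2
    omega
  have hσsucc : ∀ a : Fin n, σ a.succ ≠ 0 := by
    intro a h
    exact Fin.succ_ne_zero a (σ.injective (h.trans hσ0.symm))
  set ia : Fin n → Fin n := fun a => (σ a.succ).pred (hσsucc a) with hiadef
  have hia : ∀ a, (ia a).succ = σ a.succ := fun a => Fin.succ_pred _ _
  have hinj : Function.Injective ia := by
    intro a b h
    have h2 : σ a.succ = σ b.succ := by rw [← hia a, ← hia b, h]
    exact Fin.succ_injective _ (σ.injective h2)
  set πe : Equiv.Perm (Fin n) := Equiv.ofBijective ia (Finite.injective_iff_bijective.mp hinj)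
    with hπedef
  have hπe : ∀ a, πe a = ia a := fun _ => rfl
  refine ⟨fun a => σ.symm (f (ia a)), πe, ?_, ?_⟩
  · intro a
    by_contra hgt
    push_neg at hgt
    have hle : a.succ ≤ σ.symm (f (ia a)) := by
      rw [Fin.le_def, Fin.val_succ]; omega
    have h2 := hmono hle
    simp only [Function.comp_apply, Equiv.apply_symm_apply] at h2
    have h3 := hr (ia a)
    rw [hia a] at h3
    omega
  · have hcons : ∀ (y : Fin n → Euc d), cons0 (y ∘ ⇑πe) = (cons0 y) ∘ σ := by
      intro y; funext m
      rcases Fin.eq_zero_or_eq_succ m with rfl | ⟨a, rfl⟩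
      · simp [hσ0]
      · simp only [Function.comp_apply, cons0_succ, ← hia a, cons0_succ, hπe]
    ext y
    simp only [Set.mem_setOf_eq, Set.mem_preimage]
    constructor
    · intro h a
      rw [hcons y]
      simp only [Function.comp_apply, Equiv.apply_symm_apply, hπe, ← hia a, cons0_succ]
      exact h (ia a)
    · intro h i
      have h2 := h (πe.symm i)
      rw [hcons y] at h2
      simp only [Function.comp_apply, Equiv.apply_symm_apply, hπe] at h2
      have hii : ia (πe.symm i) = i := by
        rw [← hπe]; exact πe.apply_symm_apply i
      rw [hii] at h2
      exact h2

/-- reachability to the origin in exactly `m` steps along a relation. -/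
def Rpow {d : ℕ} (e : Euc d → Euc d → Prop) : ℕ → Euc d → Prop
  | 0, p => p = 0
  | (m+1), p => ∃ c, e p c ∧ Rpow e m c

/-- From an `R`-connected configuration, extract a spanning "parent" map together with a
rank function witnessing acyclicity. -/
lemma conn_exists_tree {d : ℕ} (R : ℝ) (hR : 0 < R) (n : ℕ) (y : Fin n → Euc d)
    (hconn : RConn R (Set.range (cons0 y))) :
    ∃ (f : Fin n → Fin (n+1)) (r : Fin (n+1) → ℕ),
      r 0 = 0 ∧ (∀ i, r (f i) < r (i.succ)) ∧ ∀ i, dist (y i) (cons0 y (f i)) ≤ R := by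
  classical
  set g := cons0 y with hg
  set S := Set.range g with hS
  set e : Euc d → Euc d → Prop := fun p q => p ∈ S ∧ q ∈ S ∧ p ≠ q ∧ dist p q ≤ R with he
  have h0S : (0 : Euc d) ∈ S := ⟨0, rfl⟩
  have hreach : ∀ p ∈ S, ∃ m, Rpow e m p := by
    intro p hp
    have h := hconn p hp 0 h0S
    induction h using Relation.ReflTransGen.head_induction_on with
    | refl => exact ⟨0, rfl⟩
    | head hac _ ih =>
      obtain ⟨m, hm⟩ := ih hac.2.1
      exact ⟨m + 1, _, hac, hm⟩
  set np : Euc d → ℕ := fun p => if h : ∃ m, Rpow e m p then Nat.find h else 0 with hnp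
  set r : Fin (n+1) → ℕ := fun idx => if idx = 0 then 0 else np (g idx) + 1 with hrdef
  have hr0 : r 0 = 0 := by simp [hrdef]
  have key : ∀ i : Fin n, ∃ m : Fin (n+1), r m < r i.succ ∧ dist (y i) (g m) ≤ R := by
    intro i
    have hrsucc : r i.succ = np (y i) + 1 := by
      simp [hrdef, Fin.succ_ne_zero i, hg]
    by_cases hp0 : y i = 0
    · refine ⟨0, ?_, ?_⟩
      · rw [hr0, hrsucc]; omega
      · rw [hp0]; simp [hg, hR.le]
    · have hpS : y i ∈ S := ⟨i.succ, by simp [hg]⟩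
      have hex : ∃ m, Rpow e m (y i) := hreach _ hpS
      have hnpy : np (y i) = Nat.find hex := by simp [hnp, dif_pos hex]
      have hspec : Rpow e (Nat.find hex) (y i) := Nat.find_spec hex
      have hpos : Nat.find hex ≠ 0 := by
        intro h
        rw [h] at hspec
        exact hp0 hspec
      obtain ⟨m', hm'⟩ : ∃ m', Nat.find hex = m' + 1 :=
        ⟨Nat.find hex - 1, by omega⟩
      rw [hm'] at hspec
      obtain ⟨c, hec, hrc⟩ := hspec
      obtain ⟨idx, hidx⟩ := hec.2.1
      refine ⟨idx, ?_, ?_⟩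
      · rcases eq_or_ne idx 0 with rfl | hne
        · rw [hr0, hrsucc]; omega
        · have hridx : r idx = np c + 1 := by simp [hrdef, hne, hidx]
          rw [hridx, hrsucc, hnpy, hm']
          have hexc : ∃ m, Rpow e m c := ⟨m', hrc⟩
          have hnpc : np c ≤ m' := by
            rw [hnp]; simp only [dif_pos hexc]
            exact Nat.find_le hrc
          omega
      · rw [hidx]; exact hec.2.2.2
  choose f hf1 hf2 using key
  exact ⟨f, r, hr0, hf1, hf2⟩

end Aux

/-- Bound on the cluster partition function: if `e_∞` is a lower bound for all the
energies per particle `E_k/k` (in particular if it is their infimum, assumed `> -∞`),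
then `Z_k^cl(β) ≤ exp(-βk e_∞) e^k |B(0,R)|^{k-1}`, for `k = j+1 ≥ 1`. -/
theorem Zcl_le (d : ℕ) (hd : 1 ≤ d)
    (v : ℝ → EReal) (hmeas : Measurable v) (hbot : ∀ r, v r ≠ ⊥)
    (einf : ℝ)
    (heinf : ∀ (m : ℕ) (f : Fin (m + 1) → EuclideanSpace ℝ (Fin d)),
      ((((m : ℝ) + 1) * einf : ℝ) : EReal) ≤ pairEnergy v f)
    (β R : ℝ) (hβ : 0 < β) (hR : 0 < R) (j : ℕ) :
    Zcl d v β R j ≤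
      ENNReal.ofReal (Real.exp (-β * ((j : ℝ) + 1) * einf) * Real.exp ((j : ℝ) + 1)) *
        (volume (Metric.ball (0 : EuclideanSpace ℝ (Fin d)) R)) ^ j := by
  classical
  have hNE : Nonempty (Fin d) := ⟨⟨0, hd⟩⟩
  set C := volume (Metric.closedBall (0 : Euc d) R) with hCdef
  haveI : Nontrivial (Euc d) := inferInstance
  have hCb : C = volume (Metric.ball (0 : Euc d) R) := by
    rw [hCdef]; exact Measure.addHaar_closedBall_eq_addHaar_ball (μ := volume) _ _
  set CE := ENNReal.ofReal (Real.exp (-β * ((j:ℝ)+1) * einf)) with hCE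
  set Conn := {y : Fin j → Euc d |
    RConn R (Set.range (Fin.cons (0 : Euc d) y))} with hConn
  -- pointwise bound on the Boltzmann factor
  have hbz : ∀ y : Fin j → Euc d,
      boltz β (pairEnergy v (Fin.cons (0 : Euc d) y)) ≤ CE := by
    intro y
    unfold boltz
    split_ifs with hT
    · exact zero_le
    · have hle := heinf j (Fin.cons (0 : Euc d) y)
      apply ENNReal.ofReal_le_ofReal
      apply Real.exp_le_exp.mpr
      have htr : ((j:ℝ)+1) * einf ≤ (pairEnergy v (Fin.cons (0 : Euc d) y)).toReal := by
        have h := EReal.toReal_le_toReal hle (EReal.coe_ne_bot _) hT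
        rw [EReal.toReal_coe] at h; exact h
      nlinarith [htr, hβ]
  have hpt : ∀ y : Fin j → Euc d,
      Set.indicator Conn (fun y => boltz β (pairEnergy v (Fin.cons (0 : Euc d) y))) y
        ≤ Set.indicator Conn (fun _ => CE) y := by
    intro y
    by_cases hy : y ∈ Conn
    · rw [Set.indicator_of_mem hy, Set.indicator_of_mem hy]; exact hbz y
    · rw [Set.indicator_of_notMem hy, Set.indicator_of_notMem hy]
  -- bound on the volume of connected configurations
  have hConnBound : volume Conn ≤ (((j+1)^j : ℕ) : ℝ≥0∞) * C^j := by
    set B : (Fin j → Fin (j+1)) → Set (Fin j → Euc d) :=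
      fun f => {y | (∃ r : Fin (j+1) → ℕ, r 0 = 0 ∧ ∀ i, r (f i) < r (i.succ)) ∧
        ∀ i, dist (y i) (cons0 y (f i)) ≤ R} with hB
    have hsub : Conn ⊆ ⋃ f, B f := by
      intro y hy
      obtain ⟨f, r, h0, h1, h2⟩ := conn_exists_tree R hR j y hy
      exact Set.mem_iUnion.mpr ⟨f, ⟨r, h0, h1⟩, h2⟩
    have hBf : ∀ f, volume (B f) ≤ C^j := by
      intro f
      by_cases hac : ∃ r : Fin (j+1) → ℕ, r 0 = 0 ∧ ∀ i, r (f i) < r (i.succ)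
      · obtain ⟨r, h0, h1⟩ := hac
        obtain ⟨f', πe, hf', hset⟩ := acyc_perm d R j f r h0 h1
        have hsub2 : B f ⊆ {y | ∀ i, dist (y i) (cons0 y (f i)) ≤ R} := fun y hy => hy.2
        calc volume (B f) ≤ volume {y | ∀ i, dist (y i) (cons0 y (f i)) ≤ R} :=
              measure_mono hsub2
          _ = volume {z | ∀ a, dist (z a) (cons0 z (f' a)) ≤ R} := by
              rw [hset]
              exact (perm_mp d j πe).measure_preimage
                (closedA R f').measurableSet.nullMeasurableSet
          _ ≤ C^j := tri d R j f' hf'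
      · have hemp : B f = ∅ := by
          ext y
          simp only [hB, Set.mem_setOf_eq, Set.mem_empty_iff_false, iff_false]
          intro h; exact hac h.1
        simp [hemp]
    calc volume Conn ≤ volume (⋃ f, B f) := measure_mono hsub
      _ ≤ ∑ f, volume (B f) := measure_iUnion_fintype_le _ _
      _ ≤ ∑ _f : Fin j → Fin (j+1), C^j := Finset.sum_le_sum (fun f _ => hBf f)
      _ = (Fintype.card (Fin j → Fin (j+1)) : ℝ≥0∞) * C^j := by
          rw [Finset.sum_const, Finset.card_univ, nsmul_eq_mul]
      _ = (((j+1)^j : ℕ) : ℝ≥0∞) * C^j := by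
          rw [Fintype.card_fun]; simp
  -- the elementary inequality (j+1)^j ≤ (j+1)! e^(j+1)
  have hkey : ((j+1).factorial : ℝ≥0∞)⁻¹ * (((j+1)^j : ℕ) : ℝ≥0∞)
      ≤ ENNReal.ofReal (Real.exp ((j:ℝ)+1)) := by
    have hreal : (((j:ℝ)+1))^j ≤ Real.exp ((j:ℝ)+1) * ((j+1).factorial : ℝ) := by
      have h1 : (((j:ℝ)+1))^(j+1) / ((j+1).factorial : ℝ)
          ≤ Real.exp ((j:ℝ)+1) := by
        calc (((j:ℝ)+1))^(j+1) / ((j+1).factorial : ℝ)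
            ≤ ∑ i ∈ Finset.range (j+2), (((j:ℝ)+1))^i / (i.factorial : ℝ) := by
              refine Finset.single_le_sum (f := fun i => (((j:ℝ)+1))^i / (i.factorial : ℝ))
                (fun i _ => by positivity) (Finset.self_mem_range_succ (j+1))
          _ ≤ Real.exp ((j:ℝ)+1) := Real.sum_le_exp_of_nonneg (by positivity) (j+2)
      have h2 : (0:ℝ) < ((j+1).factorial : ℝ) := by
        exact_mod_cast Nat.factorial_pos (j+1)
      rw [div_le_iff₀ h2] at h1
      calc (((j:ℝ)+1))^j ≤ (((j:ℝ)+1))^(j+1) := by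
            apply pow_le_pow_right₀ (by push_cast; linarith [Nat.cast_nonneg (α := ℝ) j])
            omega
        _ ≤ _ := h1
    have hEN : (((j+1)^j : ℕ) : ℝ≥0∞)
        ≤ ENNReal.ofReal (Real.exp ((j:ℝ)+1)) * ((j+1).factorial : ℝ≥0∞) := by
      have h := ENNReal.ofReal_le_ofReal hreal
      rw [ENNReal.ofReal_mul (Real.exp_nonneg _)] at h
      have hc1 : ENNReal.ofReal ((((j:ℝ)+1))^j) = (((j+1)^j : ℕ) : ℝ≥0∞) := by
        rw [← ENNReal.ofReal_natCast]
        congr 1; push_cast; ring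
      have hc2 : ENNReal.ofReal (((j+1).factorial : ℝ)) = ((j+1).factorial : ℝ≥0∞) := by
        rw [← ENNReal.ofReal_natCast]
      rw [hc1, hc2] at h
      exact h
    calc ((j+1).factorial : ℝ≥0∞)⁻¹ * (((j+1)^j : ℕ) : ℝ≥0∞)
        ≤ ((j+1).factorial : ℝ≥0∞)⁻¹ *
            (ENNReal.ofReal (Real.exp ((j:ℝ)+1)) * ((j+1).factorial : ℝ≥0∞)) :=
          mul_le_mul_right hEN _
      _ = ENNReal.ofReal (Real.exp ((j:ℝ)+1)) *
            (((j+1).factorial : ℝ≥0∞)⁻¹ * ((j+1).factorial : ℝ≥0∞)) := by ring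
      _ = ENNReal.ofReal (Real.exp ((j:ℝ)+1)) := by
          rw [ENNReal.inv_mul_cancel (by exact_mod_cast (Nat.factorial_pos (j+1)).ne')
            (ENNReal.natCast_ne_top _), mul_one]
  -- assemble
  have hint : (∫⁻ y : Fin j → Euc d,
      Set.indicator Conn
        (fun y => boltz β (pairEnergy v (Fin.cons (0 : Euc d) y))) y)
      ≤ CE * volume Conn := by
    calc (∫⁻ y, Set.indicator Conn
          (fun y => boltz β (pairEnergy v (Fin.cons (0 : Euc d) y))) y)
        ≤ ∫⁻ y, Set.indicator Conn (fun _ => CE) y := lintegral_mono hpt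
      _ ≤ CE * volume Conn := lintegral_indicator_const_le _ _
  have hZ : Zcl d v β R j ≤ ((j+1).factorial : ℝ≥0∞)⁻¹ * (CE * ((((j+1)^j : ℕ) : ℝ≥0∞) * C^j)) := by
    unfold Zcl
    refine mul_le_mul_right ?_ _
    exact hint.trans (mul_le_mul_right hConnBound _)
  refine hZ.trans ?_
  rw [ENNReal.ofReal_mul (Real.exp_nonneg _), ← hCE, ← hCb]
  calc ((j+1).factorial : ℝ≥0∞)⁻¹ * (CE * ((((j+1)^j : ℕ) : ℝ≥0∞) * C^j))
      = (((j+1).factorial : ℝ≥0∞)⁻¹ * (((j+1)^j : ℕ) : ℝ≥0∞)) * CE * C^j := by ring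
    _ ≤ ENNReal.ofReal (Real.exp ((j:ℝ)+1)) * CE * C^j := by
        exact mul_le_mul_left (mul_le_mul_left hkey _) _
    _ = CE * ENNReal.ofReal (Real.exp ((j:ℝ)+1)) * C^j := by ring

end
end

section
/- Let d ≥ 1, let v : (0,∞) → ℝ ∪ {+∞} be measurable, let U, E_k and e_∞ := inf_{k≥1} E_k/k be as usual with e_∞ > −∞, and fix R > 0 and β > 0. Then for every real z with 0 < z < exp(β·e_∞)/(e·|B(0,R)|), the series Σ_{k=1}^∞ z^k Z_k^cl(β) converges; in particular the radius of convergence R^cl(β) of the power series Σ_k Z_k^cl(β) z^k satisfies R^cl(β) ≥ exp(β·e_∞)/(e·|B(0,R)|). -/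
open MeasureTheory
open scoped ENNReal

noncomputable section

namespace ClusterAux

open scoped Classical

/-- extended parent map: vertex `0` is a fixed point, vertex `i.succ` maps to `q i`. -/
def Qext {j : ℕ} (q : Fin j → Fin (j + 1)) : Fin (j + 1) → Fin (j + 1) :=
  Fin.cases 0 q

lemma Qext_succ {j : ℕ} (q : Fin j → Fin (j + 1)) (i : Fin j) : Qext q i.succ = q i := rfl

/-- a parent map is acyclic if iterating it always reaches the root `0`. -/
def Acyclic {j : ℕ} (q : Fin j → Fin (j + 1)) : Prop :=
  ∀ i : Fin (j + 1), ∃ n : ℕ, (Qext q)^[n] i = 0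

lemma exists_leaf {j : ℕ} (q : Fin (j + 1) → Fin (j + 2)) (hq : Acyclic q) :
    ∃ ℓ : Fin (j + 1), ∀ i, q i ≠ ℓ.succ := by
  by_contra h
  push_neg at h
  have himg : (Finset.univ.image (Fin.succ : Fin (j + 1) → Fin (j + 2))) ⊆
      Finset.univ.image q := by
    intro x hx
    rcases Finset.mem_image.1 hx with ⟨ℓ, -, rfl⟩
    obtain ⟨i, hi⟩ := h ℓ
    exact Finset.mem_image.2 ⟨i, Finset.mem_univ _, hi⟩
  have hcard : (Finset.univ.image q).card ≤ j + 1 :=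
    le_trans Finset.card_image_le (by simp)
  have hcard2 : (Finset.univ.image (Fin.succ : Fin (j + 1) → Fin (j + 2))).card = j + 1 := by
    rw [Finset.card_image_of_injective _ (Fin.succ_injective _)]; simp
  have heq : Finset.univ.image (Fin.succ : Fin (j + 1) → Fin (j + 2)) = Finset.univ.image q :=
    Finset.eq_of_subset_of_card_le himg (hcard.trans hcard2.ge)
  have hne0 : ∀ i, q i ≠ 0 := by
    intro i h0
    have hmem : q i ∈ Finset.univ.image q := Finset.mem_image.2 ⟨i, Finset.mem_univ _, rfl⟩
    rw [← heq] at hmem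
    rcases Finset.mem_image.1 hmem with ⟨ℓ, -, hℓ⟩
    exact Fin.succ_ne_zero ℓ (hℓ.trans h0)
  have key : ∀ n (x : Fin (j + 2)), x ≠ 0 → (Qext q)^[n] x ≠ 0 := by
    intro n
    induction n with
    | zero => intro x hx; simpa using hx
    | succ n ihn =>
      intro x hx
      rw [Function.iterate_succ_apply]
      apply ihn
      cases x using Fin.cases with
      | zero => exact absurd rfl hx
      | succ c => rw [Qext_succ]; exact hne0 c
  obtain ⟨n, hn⟩ := hq ((0 : Fin (j + 1)).succ)
  exact key n _ (Fin.succ_ne_zero _) hn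

/-- the one-term tree weight. -/
def term (d : ℕ) (R : ℝ) {j : ℕ} (q : Fin j → Fin (j + 1))
    (y : Fin j → EuclideanSpace ℝ (Fin d)) : ℝ≥0∞ :=
  ∏ i : Fin j,
    if dist (y i)
        ((Fin.cons (0 : EuclideanSpace ℝ (Fin d)) y : Fin (j + 1) → EuclideanSpace ℝ (Fin d))
          (q i)) ≤ R then 1 else 0

variable {d : ℕ}

lemma measurable_cons_apply {j : ℕ} (m : Fin (j + 1)) :
    Measurable (fun y : Fin j → EuclideanSpace ℝ (Fin d) =>
      (Fin.cons (0 : EuclideanSpace ℝ (Fin d)) y : Fin (j + 1) → EuclideanSpace ℝ (Fin d)) m) := by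
  cases m using Fin.cases with
  | zero => simpa using measurable_const
  | succ m' => simpa using measurable_pi_apply m'

lemma measurable_term (R : ℝ) {j : ℕ} (q : Fin j → Fin (j + 1)) :
    Measurable (term d R q) := by
  apply Finset.measurable_prod
  intro i _
  have hdist : Measurable (fun y : Fin j → EuclideanSpace ℝ (Fin d) =>
      dist (y i)
        ((Fin.cons (0 : EuclideanSpace ℝ (Fin d)) y : Fin (j + 1) → EuclideanSpace ℝ (Fin d))
          (q i))) :=
    (measurable_pi_apply i).dist (measurable_cons_apply (q i))
  exact Measurable.ite (hdist measurableSet_Iic) measurable_const measurable_const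

lemma term_lintegral_le (R : ℝ) :
    ∀ (j : ℕ) (q : Fin j → Fin (j + 1)), Acyclic q →
    (∫⁻ y : Fin j → EuclideanSpace ℝ (Fin d), term d R q y) ≤
      (volume (Metric.closedBall (0 : EuclideanSpace ℝ (Fin d)) R)) ^ j := by
  intro j
  induction j with
  | zero =>
    intro q _
    have h1 : (fun y : Fin 0 → EuclideanSpace ℝ (Fin d) => term d R q y) = fun _ => 1 := by
      funext y; simp [term]
    rw [h1, lintegral_one]
    simp [volume_pi, Measure.pi_univ]
  | succ j ih =>
    intro q hq
    obtain ⟨ℓ, hℓ⟩ := exists_leaf q hq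
    set E := EuclideanSpace ℝ (Fin d)
    set B := volume (Metric.closedBall (0 : E) R) with hB
    -- the lifted parent map
    have hlift : ∀ x : Fin (j + 2), x ≠ ℓ.succ → ∃ z : Fin (j + 1), ℓ.succ.succAbove z = x :=
      fun x hx => Fin.exists_succAbove_eq hx
    set V : Fin (j + 1) → Fin (j + 2) := ℓ.succ.succAbove with hV
    have hV0 : V 0 = 0 := by
      rw [hV]
      rw [Fin.succAbove_of_castSucc_lt _ _ (by simp [Fin.succ_pos])]
      simp
    have hVsucc : ∀ c : Fin j, V c.succ = (ℓ.succAbove c).succ := by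
      intro c; rw [hV]; exact Fin.succ_succAbove_succ ℓ c
    set q' : Fin j → Fin (j + 1) := fun c => (hlift (q (ℓ.succAbove c)) (hℓ _)).choose with hq'
    have hq'spec : ∀ c, V (q' c) = q (ℓ.succAbove c) := fun c =>
      (hlift (q (ℓ.succAbove c)) (hℓ _)).choose_spec
    set vℓ : Fin (j + 1) := (hlift (q ℓ) (hℓ ℓ)).choose with hvℓ
    have hvℓspec : V vℓ = q ℓ := (hlift (q ℓ) (hℓ ℓ)).choose_spec
    -- acyclicity of q'
    have hcomm : ∀ x, V (Qext q' x) = Qext q (V x) := by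
      intro x
      cases x using Fin.cases with
      | zero =>
        show V 0 = Qext q (V 0)
        rw [hV0]; rfl
      | succ c => rw [Qext_succ, hq'spec, hVsucc, Qext_succ]
    have hiter : ∀ n x, V ((Qext q')^[n] x) = (Qext q)^[n] (V x) := by
      intro n
      induction n with
      | zero => intro x; rfl
      | succ n ihn =>
        intro x
        rw [Function.iterate_succ_apply, Function.iterate_succ_apply, ihn, hcomm]
    have hq'acyclic : Acyclic q' := by
      intro x
      obtain ⟨n, hn⟩ := hq (V x)
      refine ⟨n, ?_⟩
      apply Fin.succAbove_right_injective (p := ℓ.succ)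
      rw [show ℓ.succ.succAbove ((Qext q')^[n] x) = V ((Qext q')^[n] x) from rfl, hiter, hn, ← hV0]
    -- cons compatibility
    have hcons : ∀ (a : E) (w : Fin j → E) (m : Fin (j + 1)),
        (Fin.cons (0 : E) (ℓ.insertNth a w) : Fin (j + 2) → E) (V m) =
          (Fin.cons (0 : E) w : Fin (j + 1) → E) m := by
      intro a w m
      cases m using Fin.cases with
      | zero => rw [hV0]; simp
      | succ c => simp [hVsucc, Fin.insertNth_apply_succAbove]
    -- split the integral
    have hmp := volume_preserving_piFinSuccAbove (fun _ : Fin (j + 1) => E) ℓ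
    set e := MeasurableEquiv.piFinSuccAbove (fun _ : Fin (j + 1) => E) ℓ with he
    have hint : (∫⁻ y : Fin (j + 1) → E, term d R q y) =
        ∫⁻ p : E × (Fin j → E), term d R q (e.symm p) := by
      exact ((hmp.symm e).lintegral_comp (measurable_term R q)).symm
    have hsymm : ∀ (a : E) (w : Fin j → E), e.symm (a, w) = ℓ.insertNth a w := by
      intro a w; rfl
    have hterm : ∀ (a : E) (w : Fin j → E),
        term d R q (e.symm (a, w)) =
          (if dist a ((Fin.cons (0 : E) w : Fin (j + 1) → E) vℓ) ≤ R then 1 else 0) *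
            term d R q' w := by
      intro a w
      rw [hsymm]
      rw [term, Fin.prod_univ_succAbove _ ℓ]
      congr 1
      · rw [Fin.insertNth_apply_same, ← hvℓspec, hcons]
      · rw [term]
        apply Finset.prod_congr rfl
        intro c _
        rw [Fin.insertNth_apply_succAbove, ← hq'spec, hcons]
    -- Fubini
    have hmeas2 : Measurable (fun p : E × (Fin j → E) => term d R q (e.symm p)) :=
      (measurable_term R q).comp e.symm.measurable
    rw [hint, Measure.volume_eq_prod, lintegral_prod_symm _ hmeas2.aemeasurable]
    have hinner : ∀ w : Fin j → E,
        (∫⁻ a : E, term d R q (e.symm (a, w))) = term d R q' w * B := by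
      intro w
      simp only [hterm]
      rw [lintegral_mul_const _ (by
        apply Measurable.ite _ measurable_const measurable_const
        exact (measurable_id.dist measurable_const) measurableSet_Iic), mul_comm]
      congr 1
      have : (fun a : E =>
            (if dist a ((Fin.cons (0 : E) w : Fin (j + 1) → E) vℓ) ≤ R then (1 : ℝ≥0∞) else 0)) =
          (Metric.closedBall ((Fin.cons (0 : E) w : Fin (j + 1) → E) vℓ) R).indicator
            (1 : E → ℝ≥0∞) := by
        funext a
        simp [Set.indicator_apply, Metric.mem_closedBall]
      rw [this, lintegral_indicator_one measurableSet_closedBall, hB,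
        Measure.addHaar_closedBall_center]
    calc (∫⁻ w : Fin j → E, ∫⁻ a : E, term d R q (e.symm (a, w)))
        = ∫⁻ w : Fin j → E, term d R q' w * B := by
          apply lintegral_congr; intro w; exact hinner w
      _ = (∫⁻ w : Fin j → E, term d R q' w) * B := lintegral_mul_const _ (measurable_term R q')
      _ ≤ B ^ j * B := by
          exact mul_le_mul_left (ih q' hq'acyclic) B
      _ = B ^ (j + 1) := (pow_succ B j).symm

lemma exists_parent_aux {X : Type*} [MetricSpace X] {R : ℝ} (hR : 0 ≤ R) {j : ℕ}
    (pos : Fin (j + 1) → X)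
    (hconn : ∀ m : Fin (j + 1), Relation.ReflTransGen
      (fun p q => p ∈ Set.range pos ∧ q ∈ Set.range pos ∧ p ≠ q ∧ dist p q ≤ R)
      (pos m) (pos 0)) :
    ∃ q : Fin j → Fin (j + 1), Acyclic q ∧
      ∀ i : Fin j, dist (pos i.succ) (pos (q i)) ≤ R := by
  classical
  let r : X → X → Prop :=
    fun p q => p ∈ Set.range pos ∧ q ∈ Set.range pos ∧ p ≠ q ∧ dist p q ≤ R
  let P : X → ℕ → Prop := fun s n =>
    ∃ l : List X, List.Chain r s l ∧ l.length = n ∧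
      (s :: l).getLast (List.cons_ne_nil _ _) = pos 0
  have hPex : ∀ m : Fin (j + 1), ∃ n, P (pos m) n := by
    intro m
    obtain ⟨l, hc, hlast⟩ := List.exists_isChain_cons_of_relationReflTransGen (hconn m)
    exact ⟨l.length, l, hc, rfl, hlast⟩
  let D : X → ℕ := fun s => sInf {n | P s n}
  have hDspec : ∀ m : Fin (j + 1), P (pos m) (D (pos m)) := fun m => Nat.sInf_mem (hPex m)
  have step : ∀ i : Fin j, ∃ m : Fin (j + 1),
      dist (pos i.succ) (pos m) ≤ R ∧ (m = 0 ∨ D (pos m) < D (pos i.succ)) := by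
    intro i
    obtain ⟨l, hchain, hlen, hlast⟩ := hDspec i.succ
    cases l with
    | nil =>
      refine ⟨0, ?_, Or.inl rfl⟩
      have h0 : pos i.succ = pos 0 := by simpa using hlast
      rw [h0]
      simpa using hR
    | cons t l' =>
      have hrst : r (pos i.succ) t := (List.chain_cons.1 hchain).1
      have hct : List.Chain r t l' := (List.chain_cons.1 hchain).2
      have hlast' : (t :: l').getLast (List.cons_ne_nil _ _) = pos 0 := by
        rwa [List.getLast_cons_cons] at hlast
      have hPt : P t l'.length := ⟨l', hct, rfl, hlast'⟩
      have htS : t ∈ Set.range pos := hrst.2.1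
      obtain ⟨m, hm⟩ := htS
      have hdist : dist (pos i.succ) t ≤ R := hrst.2.2.2
      by_cases ht0 : t = pos 0
      · exact ⟨0, by rw [← ht0]; exact hdist, Or.inl rfl⟩
      · refine ⟨m, by rw [hm]; exact hdist, Or.inr ?_⟩
        rw [hm]
        have h1 : D t ≤ l'.length := Nat.sInf_le hPt
        have h2 : l'.length < D (pos i.succ) := by
          rw [← hlen]; simp
        omega
  choose q hq1 hq2 using step
  refine ⟨q, ?_, hq1⟩
  have main : ∀ N : ℕ, ∀ i : Fin (j + 1), D (pos i) ≤ N → ∃ n, (Qext q)^[n] i = 0 := by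
    intro N
    induction N with
    | zero =>
      intro i hDi
      cases i using Fin.cases with
      | zero => exact ⟨0, rfl⟩
      | succ i' =>
        rcases hq2 i' with h | h
        · exact ⟨1, by simp [Function.iterate_one, Qext_succ, h]⟩
        · omega
    | succ N ihn =>
      intro i hDi
      cases i using Fin.cases with
      | zero => exact ⟨0, rfl⟩
      | succ i' =>
        rcases hq2 i' with h | h
        · exact ⟨1, by simp [Function.iterate_one, Qext_succ, h]⟩
        · obtain ⟨n, hn⟩ := ihn (q i') (by omega)
          exact ⟨n + 1, by rw [Function.iterate_succ_apply, Qext_succ]; exact hn⟩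
  intro i
  exact main (D (pos i)) i le_rfl

lemma exists_parent {R : ℝ} (hR : 0 ≤ R) {j : ℕ}
    (y : Fin j → EuclideanSpace ℝ (Fin d))
    (hconn : RConn R (Set.range (Fin.cons (0 : EuclideanSpace ℝ (Fin d)) y))) :
    ∃ q : Fin j → Fin (j + 1), Acyclic q ∧ ∀ i : Fin j,
      dist (y i)
        ((Fin.cons (0 : EuclideanSpace ℝ (Fin d)) y : Fin (j + 1) → EuclideanSpace ℝ (Fin d))
          (q i)) ≤ R := by
  obtain ⟨q, hacy, hdist⟩ := exists_parent_aux hR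
    (Fin.cons (0 : EuclideanSpace ℝ (Fin d)) y : Fin (j + 1) → EuclideanSpace ℝ (Fin d))
    (fun m => hconn _ ⟨m, rfl⟩ _ ⟨0, rfl⟩)
  refine ⟨q, hacy, fun i => ?_⟩
  have := hdist i
  rwa [Fin.cons_succ] at this
  done

end ClusterAux

open ClusterAux

/-- Convergence of the cluster series: if `e_∞` is a lower bound for the energies per
particle `E_k/k` (in particular their infimum, assumed `> -∞`), then for every
`0 < z < exp(β e_∞)/(e |B(0,R)|)` the series `Σ_{k≥1} z^k Z_k^cl(β)` converges; in
particular the radius of convergence `R^cl(β)` is at least `exp(β e_∞)/(e |B(0,R)|)`. -/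
theorem cluster_series_converges (d : ℕ) (hd : 1 ≤ d)
    (v : ℝ → EReal) (hmeas : Measurable v) (hbot : ∀ r, v r ≠ ⊥)
    (einf : ℝ)
    (heinf : ∀ (m : ℕ) (f : Fin (m + 1) → EuclideanSpace ℝ (Fin d)),
      ((((m : ℝ) + 1) * einf : ℝ) : EReal) ≤ pairEnergy v f)
    (β R : ℝ) (hβ : 0 < β) (hR : 0 < R)
    (z : ℝ) (hz : 0 < z)
    (hz2 : z < Real.exp (β * einf) /
      (Real.exp 1 * (volume (Metric.ball (0 : EuclideanSpace ℝ (Fin d)) R)).toReal)) :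
    (∑' j : ℕ, ENNReal.ofReal (z ^ (j + 1)) * Zcl d v β R j) < ⊤ := by
  classical
  set E := EuclideanSpace ℝ (Fin d) with hE
  set B : ℝ≥0∞ := volume (Metric.closedBall (0 : E) R) with hBdef
  -- pointwise bound on the integrand
  have hpt : ∀ (j : ℕ) (y : Fin j → E),
      Set.indicator
        {y : Fin j → E | RConn R (Set.range (Fin.cons (0 : E) y))}
        (fun y => boltz β (pairEnergy v (Fin.cons (0 : E) y))) y ≤
      ENNReal.ofReal (Real.exp (-β * (((j : ℝ) + 1) * einf))) *
        ∑ q : Fin j → Fin (j + 1), (if Acyclic q then term d R q y else 0) := by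
    intro j y
    by_cases hy : y ∈ {y : Fin j → E | RConn R (Set.range (Fin.cons (0 : E) y))}
    · rw [Set.indicator_of_mem hy]
      have hEb : boltz β (pairEnergy v (Fin.cons (0 : E) y)) ≤
          ENNReal.ofReal (Real.exp (-β * (((j : ℝ) + 1) * einf))) := by
        rw [boltz]
        split_ifs with hT
        · exact zero_le
        · apply ENNReal.ofReal_le_ofReal
          apply Real.exp_le_exp.2
          have h := heinf j (Fin.cons (0 : E) y)
          have hle : (((j : ℝ) + 1) * einf : ℝ) ≤ (pairEnergy v (Fin.cons (0 : E) y)).toReal := by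
            have := EReal.toReal_le_toReal h (EReal.coe_ne_bot _) hT
            rwa [EReal.toReal_coe] at this
          nlinarith [hβ.le]
      have hsum : (1 : ℝ≥0∞) ≤
          ∑ q : Fin j → Fin (j + 1), (if Acyclic q then term d R q y else 0) := by
        obtain ⟨q, hacy, hdist⟩ := exists_parent hR.le y hy
        have hterm1 : (if Acyclic q then term d R q y else 0) = 1 := by
          rw [if_pos hacy, term]
          apply Finset.prod_eq_one
          intro i _
          rw [if_pos (hdist i)]
        calc (1 : ℝ≥0∞) = (if Acyclic q then term d R q y else 0) := hterm1.symm
          _ ≤ _ := Finset.single_le_sum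
              (f := fun q : Fin j → Fin (j + 1) => if Acyclic q then term d R q y else 0)
              (fun _ _ => zero_le) (Finset.mem_univ q)
      calc boltz β (pairEnergy v (Fin.cons (0 : E) y))
          ≤ ENNReal.ofReal (Real.exp (-β * (((j : ℝ) + 1) * einf))) := hEb
        _ = ENNReal.ofReal (Real.exp (-β * (((j : ℝ) + 1) * einf))) * 1 := (mul_one _).symm
        _ ≤ _ := mul_le_mul_right hsum _
    · rw [Set.indicator_of_notMem hy]
      exact zero_le
  -- bound on Zcl
  have hZcl : ∀ j : ℕ, Zcl d v β R j ≤
      ((j + 1).factorial : ℝ≥0∞)⁻¹ *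
        (ENNReal.ofReal (Real.exp (-β * (((j : ℝ) + 1) * einf))) *
          (((j + 1) ^ j : ℕ) * B ^ j)) := by
    intro j
    rw [Zcl]
    apply mul_le_mul_right
    have hmeasq : ∀ q : Fin j → Fin (j + 1),
        Measurable (fun y : Fin j → E => (if Acyclic q then term d R q y else 0 : ℝ≥0∞)) := by
      intro q
      by_cases hacq : Acyclic q
      · simpa [hacq] using measurable_term R q
      · simpa [hacq] using measurable_const
    calc (∫⁻ y : Fin j → E, Set.indicator _ _ y)
        ≤ ∫⁻ y : Fin j → E,
            ENNReal.ofReal (Real.exp (-β * (((j : ℝ) + 1) * einf))) *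
              ∑ q : Fin j → Fin (j + 1), (if Acyclic q then term d R q y else 0) :=
          lintegral_mono (hpt j)
      _ = ENNReal.ofReal (Real.exp (-β * (((j : ℝ) + 1) * einf))) *
            ∫⁻ y : Fin j → E,
              ∑ q : Fin j → Fin (j + 1), (if Acyclic q then term d R q y else 0) := by
          rw [lintegral_const_mul _ (Finset.measurable_sum _ (fun q _ => hmeasq q))]
      _ ≤ ENNReal.ofReal (Real.exp (-β * (((j : ℝ) + 1) * einf))) * (((j + 1) ^ j : ℕ) * B ^ j) := by
          apply mul_le_mul_right
          rw [lintegral_finset_sum _ (fun q _ => hmeasq q)]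
          calc (∑ q : Fin j → Fin (j + 1),
                ∫⁻ y : Fin j → E, (if Acyclic q then term d R q y else 0)) ≤
              ∑ _q : Fin j → Fin (j + 1), B ^ j := by
                apply Finset.sum_le_sum
                intro q _
                by_cases hacq : Acyclic q
                · simpa [hacq] using term_lintegral_le R j q hacq
                · simp [hacq]
            _ = (((j + 1) ^ j : ℕ) * B ^ j) := by
                rw [Finset.sum_const, Finset.card_univ, nsmul_eq_mul]
                congr 1
                rw [Fintype.card_fun]
                simp
  -- assemble the series
  have hBfin : B ≠ ⊤ := (measure_closedBall_lt_top).ne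
  haveI : Nontrivial E := by
    apply Module.nontrivial_of_finrank_pos (R := ℝ)
    rw [finrank_euclideanSpace_fin]
    omega
  have hBball : B = volume (Metric.ball (0 : E) R) := by
    rw [hBdef]
    exact Measure.addHaar_closedBall_eq_addHaar_ball (μ := volume) 0 R
  have hBpos : 0 < B := by
    rw [hBball]
    exact Metric.measure_ball_pos volume 0 hR
  set b : ℝ := (volume (Metric.ball (0 : E) R)).toReal with hb
  have hBbfin : volume (Metric.ball (0 : E) R) ≠ ⊤ := by rw [← hBball]; exact hBfin
  have hbpos : 0 < b := by
    rw [hb]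
    exact ENNReal.toReal_pos (by rw [← hBball]; exact hBpos.ne') hBbfin
  have hBb : B = ENNReal.ofReal b := by
    rw [hBball, hb, ENNReal.ofReal_toReal hBbfin]
  -- the key real inequality
  have hzb : z * (Real.exp 1 * b) < Real.exp (β * einf) := by
    have := (lt_div_iff₀ (by positivity : (0:ℝ) < Real.exp 1 * b)).1 hz2
    linarith
  have hρlt : z * Real.exp (-(β * einf)) * Real.exp 1 * b < 1 := by
    have h1 : Real.exp (-(β * einf)) > 0 := Real.exp_pos _
    have h2 : z * (Real.exp 1 * b) * Real.exp (-(β * einf)) <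
        Real.exp (β * einf) * Real.exp (-(β * einf)) :=
      mul_lt_mul_of_pos_right hzb h1
    rw [← Real.exp_add, add_neg_cancel, Real.exp_zero] at h2
    nlinarith
  set ρ : ℝ≥0∞ := ENNReal.ofReal (z * Real.exp (-(β * einf)) * Real.exp 1) with hρ
  have hρB : ρ * B < 1 := by
    rw [hρ, hBb, ← ENNReal.ofReal_mul (by positivity)]
    exact ENNReal.ofReal_lt_one.2 hρlt
  have hρfin : ρ ≠ ⊤ := ENNReal.ofReal_ne_top
  -- bound each term of the series
  have hterm : ∀ j : ℕ, ENNReal.ofReal (z ^ (j + 1)) * Zcl d v β R j ≤ ρ ^ (j + 1) * B ^ j := by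
    intro j
    have hfactpos : ((j + 1).factorial : ℝ≥0∞) ≠ 0 :=
      Nat.cast_ne_zero.2 (Nat.factorial_ne_zero _)
    have hfactfin : ((j + 1).factorial : ℝ≥0∞) ≠ ⊤ := ENNReal.natCast_ne_top _
    -- (j+1)^j ≤ e^(j+1) * (j+1)!
    have hreal : (((j : ℝ) + 1)) ^ j ≤ Real.exp 1 ^ (j + 1) * (j + 1).factorial := by
      have h1 : (((j : ℝ) + 1)) ^ (j + 1) / (j + 1).factorial ≤ Real.exp (((j : ℝ) + 1)) := by
        have := Real.pow_div_factorial_le_exp (x := ((j : ℝ) + 1)) (by positivity) (j + 1)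
        simpa using this
      have h2 : Real.exp (((j : ℝ) + 1)) = Real.exp 1 ^ (j + 1) := by
        rw [← Real.exp_nat_mul]
        norm_num
      have hfp : (0 : ℝ) < (j + 1).factorial := by
        exact_mod_cast Nat.factorial_pos _
      have h3 : (((j : ℝ) + 1)) ^ (j + 1) ≤ Real.exp 1 ^ (j + 1) * (j + 1).factorial := by
        rw [div_le_iff₀ hfp] at h1
        rw [← h2]
        exact h1
      have h4 : (((j : ℝ) + 1)) ^ j ≤ (((j : ℝ) + 1)) ^ (j + 1) := by
        apply pow_le_pow_right₀ (by push_cast; linarith [Nat.cast_nonneg (α := ℝ) j])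
        omega
      linarith
    have hcomb : (((j + 1) ^ j : ℕ) : ℝ≥0∞) * ((j + 1).factorial : ℝ≥0∞)⁻¹ ≤
        (ENNReal.ofReal (Real.exp 1)) ^ (j + 1) := by
      have hup : (((j + 1) ^ j : ℕ) : ℝ≥0∞) ≤
          (ENNReal.ofReal (Real.exp 1)) ^ (j + 1) * ((j + 1).factorial : ℝ≥0∞) := by
        rw [← ENNReal.ofReal_natCast ((j+1)^j), ← ENNReal.ofReal_natCast (j+1).factorial,
          ← ENNReal.ofReal_pow (Real.exp_nonneg 1),
          ← ENNReal.ofReal_mul (by positivity)]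
        apply ENNReal.ofReal_le_ofReal
        push_cast
        exact hreal
      calc (((j + 1) ^ j : ℕ) : ℝ≥0∞) * ((j + 1).factorial : ℝ≥0∞)⁻¹
          ≤ ((ENNReal.ofReal (Real.exp 1)) ^ (j + 1) * ((j + 1).factorial : ℝ≥0∞)) *
              ((j + 1).factorial : ℝ≥0∞)⁻¹ := mul_le_mul_left hup _
        _ = (ENNReal.ofReal (Real.exp 1)) ^ (j + 1) *
              (((j + 1).factorial : ℝ≥0∞) * ((j + 1).factorial : ℝ≥0∞)⁻¹) := by ring
        _ = (ENNReal.ofReal (Real.exp 1)) ^ (j + 1) := by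
            rw [ENNReal.mul_inv_cancel hfactpos hfactfin, mul_one]
    have hexp : ENNReal.ofReal (Real.exp (-β * (((j : ℝ) + 1) * einf))) =
        (ENNReal.ofReal (Real.exp (-(β * einf)))) ^ (j + 1) := by
      rw [← ENNReal.ofReal_pow (Real.exp_nonneg _), ← Real.exp_nat_mul]
      congr 1
      push_cast
      ring_nf
    calc ENNReal.ofReal (z ^ (j + 1)) * Zcl d v β R j
        ≤ ENNReal.ofReal (z ^ (j + 1)) *
            (((j + 1).factorial : ℝ≥0∞)⁻¹ *
              (ENNReal.ofReal (Real.exp (-β * (((j : ℝ) + 1) * einf))) *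
                (((j + 1) ^ j : ℕ) * B ^ j))) := mul_le_mul_right (hZcl j) _
      _ = (ENNReal.ofReal z) ^ (j + 1) *
            (ENNReal.ofReal (Real.exp (-(β * einf)))) ^ (j + 1) *
            ((((j + 1) ^ j : ℕ) : ℝ≥0∞) * ((j + 1).factorial : ℝ≥0∞)⁻¹) * B ^ j := by
          rw [← ENNReal.ofReal_pow hz.le, hexp]
          ring
      _ ≤ (ENNReal.ofReal z) ^ (j + 1) *
            (ENNReal.ofReal (Real.exp (-(β * einf)))) ^ (j + 1) *
            ((ENNReal.ofReal (Real.exp 1)) ^ (j + 1)) * B ^ j := by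
          exact mul_le_mul_left (mul_le_mul_right hcomb _) _
      _ = ρ ^ (j + 1) * B ^ j := by
          congr 1
          rw [hρ, ENNReal.ofReal_mul (by positivity), ENNReal.ofReal_mul hz.le,
            mul_pow, mul_pow]
    -- done
  calc (∑' j : ℕ, ENNReal.ofReal (z ^ (j + 1)) * Zcl d v β R j)
      ≤ ∑' j : ℕ, ρ ^ (j + 1) * B ^ j := ENNReal.tsum_le_tsum hterm
    _ = ∑' j : ℕ, ρ * (ρ * B) ^ j := by
        apply tsum_congr
        intro j
        rw [mul_pow, pow_succ]
        ring
    _ = ρ * ∑' j : ℕ, (ρ * B) ^ j := ENNReal.tsum_mul_left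
    _ = ρ * (1 - ρ * B)⁻¹ := by rw [ENNReal.tsum_geometric]
    _ < ⊤ := by
        apply ENNReal.mul_lt_top hρfin.lt_top
        apply ENNReal.inv_lt_top.2
        simp [tsub_pos_iff_lt, hρB]

end
end
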